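/- Let 𝒢 be a GRN with associated PRN ℛ, let ρ_i ≺ ρ_{i+1} be adjacent super-simple nodes of 𝒢, and let τ be an appendage node of 𝒢. Then there exists a directed cycle in 𝒢 containing τ, containing at least one simple node, such that every simple node on the cycle is a non-super-simple simple node between ρ_i and ρ_{i+1} and every other node on the cycle is appendage, if and only if there exists a directed cycle in ℛ containing both (τ,R) and (τ,P), containing at least one simple node, such that every simple node on the cycle is a non-super-simple simple node between (ρ_i,P) and (ρ_{i+1},R) and every other node on the cycle is appendage. -/

import Mathlib

open List Relation

/- In the PRN on `V × Bool`, the node `(v, false)` is the mRNA node `v^R`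
   and `(v, true)` is the protein node `v^P`. -/

/-- Arrow relation of the PRN associated to a GRN with arrow relation `E`:
arrows `(v,R) → (v,P)` for every `v`, and `(u,P) → (v,R)` whenever `E u v`. -/
def prnAdj {V : Type*} (E : V → V → Prop) : V × Bool → V × Bool → Prop :=
  fun a b =>
    (a.1 = b.1 ∧ a.2 = false ∧ b.2 = true) ∨
    (E a.1 b.1 ∧ a.2 = true ∧ b.2 = false)

/-- The lift of a path `σ₁ → ⋯ → σ_m` in the GRN to the path
`(σ₁,R) → (σ₁,P) → ⋯ → (σ_m,R) → (σ_m,P)` in the PRN. -/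
def liftPath {V : Type*} (l : List V) : List (V × Bool) :=
  l.flatMap fun v => [(v, false), (v, true)]

/-- A simple path: a nonempty directed path visiting each node at most once. -/
def IsSimplePath {V : Type*} (E : V → V → Prop) (l : List V) : Prop :=
  l ≠ [] ∧ l.Chain' E ∧ l.Nodup

/-- A simple path from `a` to `b`. -/
def IsSimplePathFrom {V : Type*} (E : V → V → Prop) (a b : V) (l : List V) : Prop :=
  IsSimplePath E l ∧ l.head? = some a ∧ l.getLast? = some b

/-- A node is simple if it lies on some simple path from the input to the output. -/
def IsSimpleNode {V : Type*} (E : V → V → Prop) (ι o v : V) : Prop :=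
  ∃ l, IsSimplePathFrom E ι o l ∧ v ∈ l

/-- A node is super-simple if it lies on every simple path from the input to the output. -/
def IsSuperSimpleNode {V : Type*} (E : V → V → Prop) (ι o v : V) : Prop :=
  ∀ l, IsSimplePathFrom E ι o l → v ∈ l

/-- A node is appendage if it lies on no simple path from the input to the output. -/
def IsAppendageNode {V : Type*} (E : V → V → Prop) (ι o v : V) : Prop :=
  ¬ IsSimpleNode E ι o v

/-- An appendage path from `a` to `b`: a simple path from `a` to `b` each of whose
nodes, except possibly `a` and `b`, is an appendage node. -/
def IsAppendagePath {V : Type*} (E : V → V → Prop) (ι o a b : V) (l : List V) : Prop :=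
  IsSimplePathFrom E a b l ∧ ∀ v ∈ l, v ≠ a → v ≠ b → IsAppendageNode E ι o v

/-- A directed cycle: a nonempty closed directed walk visiting each of its nodes
exactly once (a self-loop is a cycle of length one). -/
def IsCycle {V : Type*} (E : V → V → Prop) (c : List V) : Prop :=
  c ≠ [] ∧ c.Chain' E ∧ c.Nodup ∧
    ∃ a b, c.head? = some a ∧ c.getLast? = some b ∧ E b a

/-- Arrow relation of the appendage subnetwork: the induced subgraph on appendage nodes. -/
def appendageAdj {V : Type*} (E : V → V → Prop) (ι o : V) : V → V → Prop :=
  fun a b => E a b ∧ IsAppendageNode E ι o a ∧ IsAppendageNode E ι o b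

/-- Two appendage nodes are path-equivalent if each is reachable from the other by a
directed path lying entirely within the appendage subnetwork. -/
def PathEquiv {V : Type*} (E : V → V → Prop) (ι o a b : V) : Prop :=
  Relation.ReflTransGen (appendageAdj E ι o) a b ∧
  Relation.ReflTransGen (appendageAdj E ι o) b a

/-- A node `x` is between `a` and `b` if some input-to-output simple path visits
`a`, `x`, `b` in that order. -/
def Between {V : Type*} (E : V → V → Prop) (ι o a x b : V) : Prop :=
  ∃ l, IsSimplePathFrom E ι o l ∧ [a, x, b].Sublist l

section Aux

variable {V : Type*} {E : V → V → Prop} {ι o : V}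

@[simp] lemma liftPath_nil : liftPath ([] : List V) = [] := rfl

@[simp] lemma liftPath_cons (v : V) (l : List V) :
    liftPath (v :: l) = (v, false) :: (v, true) :: liftPath l := rfl

@[simp] lemma mem_liftPath {l : List V} {v : V} {b : Bool} :
    (v, b) ∈ liftPath l ↔ v ∈ l := by
  induction l with
  | nil => simp
  | cons a t ih =>
    simp only [liftPath_cons, mem_cons, ih, Prod.mk.injEq]
    cases b <;> simp <;> tauto

@[simp] lemma liftPath_eq_nil {l : List V} : liftPath l = [] ↔ l = [] := by
  cases l <;> simp

lemma liftPath_head? {l : List V} : (liftPath l).head? = l.head?.map (·, false) := by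
  cases l <;> simp

lemma liftPath_getLast? {l : List V} : (liftPath l).getLast? = l.getLast?.map (·, true) := by
  induction l with
  | nil => simp
  | cons a t ih =>
    cases t with
    | nil => simp [liftPath]
    | cons b t' =>
      simp only [liftPath_cons] at *
      rw [getLast?_cons_cons, getLast?_cons_cons, ih, getLast?_cons_cons]

lemma liftPath_nodup {l : List V} (h : l.Nodup) : (liftPath l).Nodup := by
  induction l with
  | nil => simp
  | cons a t ih =>
    simp only [nodup_cons] at h
    simp only [liftPath_cons, nodup_cons, mem_cons, mem_liftPath, Prod.mk.injEq]
    refine ⟨by simp [h.1], by simp [h.1], ih h.2⟩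

lemma nodup_of_liftPath {l : List V} (h : (liftPath l).Nodup) : l.Nodup := by
  induction l with
  | nil => simp
  | cons a t ih =>
    simp only [liftPath_cons, nodup_cons, mem_cons, mem_liftPath] at h
    exact nodup_cons.2 ⟨fun hm => h.1 (Or.inr hm), ih h.2.2⟩

lemma liftPath_chain' {l : List V} (h : l.Chain' E) : (liftPath l).Chain' (prnAdj E) := by
  induction l with
  | nil => exact isChain_nil
  | cons a t ih =>
    rcases t with _ | ⟨b, t'⟩
    · simp [liftPath, prnAdj, List.Chain']
    · simp only [List.Chain', isChain_cons_cons] at h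
      have := ih h.2
      simp only [liftPath_cons] at *
      refine isChain_cons_cons.2 ⟨Or.inl ⟨rfl, rfl, rfl⟩, isChain_cons_cons.2 ⟨Or.inr ⟨h.1, rfl, rfl⟩, this⟩⟩


lemma getLast?_cons_ne {α : Type*} {a : α} {l : List α} (h : l ≠ []) :
    (a :: l).getLast? = l.getLast? := by
  cases l with
  | nil => exact absurd rfl h
  | cons b t => rw [getLast?_cons_cons]

/-- Structure lemma: any chain in the PRN from an R-node to a P-node is a lift. -/
lemma unlift : ∀ (n : ℕ) (L : List (V × Bool)), L.length ≤ n → L.Chain' (prnAdj E) →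
    ∀ v w : V, L.head? = some (v, false) → L.getLast? = some (w, true) →
    ∃ l : List V, l ≠ [] ∧ L = liftPath l ∧ l.head? = some v ∧ l.getLast? = some w ∧
      l.Chain' E := by
  intro n
  induction n with
  | zero =>
    intro L hn _ v w hh _
    rw [Nat.le_zero, List.length_eq_zero_iff] at hn
    subst hn
    simp at hh
  | succ n ih =>
    intro L hn hc v w hh hl
    match L with
    | [] => simp at hh
    | [x] =>
      simp only [head?_cons, Option.some.injEq] at hh
      subst hh
      simp at hl
    | x :: y :: L' =>
      simp only [head?_cons, Option.some.injEq] at hh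
      subst hh
      rw [List.Chain', isChain_cons_cons] at hc
      obtain ⟨hxy, hc'⟩ := hc
      have hy : y = (v, true) := by
        rcases hxy with ⟨h1, _, h3⟩ | ⟨_, h2, _⟩
        · obtain ⟨y1, y2⟩ := y; simp_all
        · simp at h2
      subst hy
      rcases L' with _ | ⟨z, L''⟩
      · have hvw : v = w := by simpa using hl
        subst hvw
        exact ⟨[v], by simp, by simp [liftPath], by simp, by simp, isChain_singleton _⟩
      · rw [isChain_cons_cons] at hc'
        obtain ⟨hyz, hc''⟩ := hc'
        obtain ⟨u, hz⟩ : ∃ u, z = (u, false) := by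
          rcases hyz with ⟨_, h2, _⟩ | ⟨_, _, h3⟩
          · simp at h2
          · exact ⟨z.1, by rw [← h3]⟩
        subst hz
        have hE : E v u := by
          rcases hyz with ⟨_, h2, _⟩ | ⟨h1, _, _⟩
          · simp at h2
          · exact h1
        have hl' : ((u, false) :: L'').getLast? = some (w, true) := by
          rw [getLast?_cons_cons, getLast?_cons_cons] at hl
          exact hl
        obtain ⟨l, hne, hLl, hhd, hlst, hch⟩ :=
          ih ((u, false) :: L'') (by simp at hn ⊢; omega) hc'' u w (by simp) hl'
        refine ⟨v :: l, by simp, ?_, by simp, ?_, ?_⟩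
        · rw [liftPath_cons, ← hLl]
        · rwa [getLast?_cons_ne hne]
        · rw [List.Chain', isChain_cons]
          refine ⟨fun y hy => ?_, hch⟩
          rw [hhd] at hy
          simp at hy
          rwa [← hy]

lemma liftPath_spf {a b : V} {l : List V} (h : IsSimplePathFrom E a b l) :
    IsSimplePathFrom (prnAdj E) (a, false) (b, true) (liftPath l) := by
  obtain ⟨⟨hne, hch, hnd⟩, hh, hl⟩ := h
  exact ⟨⟨by simpa using hne, liftPath_chain' hch, liftPath_nodup hnd⟩,
    by rw [liftPath_head?, hh]; rfl, by rw [liftPath_getLast?, hl]; rfl⟩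

lemma spf_iff_lift {a b : V} {L : List (V × Bool)} :
    IsSimplePathFrom (prnAdj E) (a, false) (b, true) L ↔
      ∃ l, L = liftPath l ∧ IsSimplePathFrom E a b l := by
  constructor
  · rintro ⟨⟨hne, hch, hnd⟩, hh, hl⟩
    obtain ⟨l, hlne, hLl, hhd, hlst, hche⟩ := unlift L.length L le_rfl hch a b hh hl
    exact ⟨l, hLl, ⟨hlne, hche, nodup_of_liftPath (hLl ▸ hnd)⟩, hhd, hlst⟩
  · rintro ⟨l, rfl, h⟩
    exact liftPath_spf h

lemma simpleNode_iff {v : V} {b : Bool} :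
    IsSimpleNode (prnAdj E) (ι, false) (o, true) (v, b) ↔ IsSimpleNode E ι o v := by
  constructor
  · rintro ⟨L, hL, hm⟩
    obtain ⟨l, rfl, hl⟩ := spf_iff_lift.1 hL
    exact ⟨l, hl, mem_liftPath.1 hm⟩
  · rintro ⟨l, hl, hm⟩
    exact ⟨liftPath l, liftPath_spf hl, mem_liftPath.2 hm⟩

lemma superSimpleNode_iff {v : V} {b : Bool} :
    IsSuperSimpleNode (prnAdj E) (ι, false) (o, true) (v, b) ↔ IsSuperSimpleNode E ι o v := by
  constructor
  · intro h l hl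
    exact mem_liftPath.1 (h (liftPath l) (liftPath_spf hl))
  · intro h L hL
    obtain ⟨l, rfl, hl⟩ := spf_iff_lift.1 hL
    exact mem_liftPath.2 (h l hl)

lemma liftPath_sublist {s l : List V} (h : s.Sublist l) :
    (liftPath s).Sublist (liftPath l) := by
  induction h with
  | slnil => simp
  | cons a _ ih =>
    rw [liftPath_cons]
    exact (ih.cons _).cons _
  | cons_cons a _ ih =>
    rw [liftPath_cons, liftPath_cons]
    exact (ih.cons₂ _).cons₂ _

lemma sub2 : ∀ {t : List V} {v ρ₂ : V} {b : Bool},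
    [(v, b), (ρ₂, false)].Sublist (liftPath t) → [v, ρ₂].Sublist t := by
  intro t
  induction t with
  | nil => intro v ρ₂ b h; simp at h
  | cons c t' ih =>
    intro v ρ₂ b h
    rw [liftPath_cons] at h
    have key : ρ₂ ∈ t' → [v, ρ₂].Sublist (v :: t') :=
      fun hm => (singleton_sublist.2 hm).cons₂ v
    rcases sublist_cons_iff.1 h with h | ⟨r, hr, hrs⟩
    · rcases sublist_cons_iff.1 h with h | ⟨r, hr, hrs⟩
      · exact (ih h).trans (sublist_cons_self _ _)
      · simp only [List.cons.injEq, Prod.mk.injEq] at hr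
        obtain ⟨⟨rfl, -⟩, h2⟩ := hr
        subst h2
        exact key (mem_liftPath.1 (hrs.mem (List.mem_singleton_self _)))
    · simp only [List.cons.injEq, Prod.mk.injEq] at hr
      obtain ⟨⟨rfl, -⟩, h2⟩ := hr
      subst h2
      have hm : (ρ₂, false) ∈ (v, true) :: liftPath t' := hrs.mem (List.mem_singleton_self _)
      rcases mem_cons.1 hm with h | h
      · exact absurd (congrArg Prod.snd h) (by simp)
      · exact key (mem_liftPath.1 h)

lemma sub3 : ∀ {l : List V} {ρ₁ v ρ₂ : V} {b : Bool},
    [(ρ₁, true), (v, b), (ρ₂, false)].Sublist (liftPath l) → [ρ₁, v, ρ₂].Sublist l := by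
  intro l
  induction l with
  | nil => intro ρ₁ v ρ₂ b h; simp at h
  | cons c t ih =>
    intro ρ₁ v ρ₂ b h
    rw [liftPath_cons] at h
    rcases sublist_cons_iff.1 h with h | ⟨r, hr, hrs⟩
    · rcases sublist_cons_iff.1 h with h | ⟨r, hr, hrs⟩
      · exact (ih h).trans (sublist_cons_self _ _)
      · simp only [List.cons.injEq, Prod.mk.injEq] at hr
        obtain ⟨⟨rfl, -⟩, h2⟩ := hr
        subst h2
        exact (sub2 hrs).cons₂ ρ₁
    · exact absurd (congrArg Prod.snd (List.cons.injEq .. ▸ hr).1.symm) (by simp)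

lemma between_iff {ρ₁ ρ₂ v : V} {b : Bool} :
    Between (prnAdj E) (ι, false) (o, true) (ρ₁, true) (v, b) (ρ₂, false) ↔
      Between E ι o ρ₁ v ρ₂ := by
  constructor
  · rintro ⟨L, hL, hs⟩
    obtain ⟨l, rfl, hl⟩ := spf_iff_lift.1 hL
    exact ⟨l, hl, sub3 hs⟩
  · rintro ⟨l, hl, hs⟩
    refine ⟨liftPath l, liftPath_spf hl, .trans ?_ (liftPath_sublist hs)⟩
    rw [liftPath_cons, liftPath_cons, liftPath_cons, liftPath_nil]
    cases b
    · exact .cons _ (.cons₂ _ (.cons₂ _ (.cons _ (.cons₂ _ (nil_sublist _)))))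
    · exact .cons _ (.cons₂ _ (.cons _ (.cons₂ _ (.cons₂ _ (nil_sublist _)))))

lemma liftPath_cycle {c : List V} (h : IsCycle E c) : IsCycle (prnAdj E) (liftPath c) := by
  obtain ⟨hne, hch, hnd, a, b, hh, hl, hE⟩ := h
  refine ⟨by simpa using hne, liftPath_chain' hch, liftPath_nodup hnd,
    (a, false), (b, true), ?_, ?_, Or.inr ⟨hE, rfl, rfl⟩⟩
  · rw [liftPath_head?, hh]; rfl
  · rw [liftPath_getLast?, hl]; rfl

lemma getLast?_append_right {α : Type*} {l l' : List α} (h : l' ≠ []) :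
    (l ++ l').getLast? = l'.getLast? := by
  rw [getLast?_append, getLast?_eq_getLast h, Option.some_or]

lemma cycle_rotate {α : Type*} {R : α → α → Prop} {c : List α} (h : IsCycle R c) {v : α}
    (hv : v ∈ c) : ∃ c', IsCycle R c' ∧ c'.head? = some v ∧ ∀ x, x ∈ c' ↔ x ∈ c := by
  obtain ⟨s, t, rfl⟩ := append_of_mem hv
  obtain ⟨hne, hch, hnd, a, b, hh, hl, hE⟩ := h
  cases s with
  | nil =>
    simp only [nil_append] at hch hnd hh hl ⊢
    have ha : a = v := by
      have := hh
      simp only [head?_cons, Option.some.injEq] at this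
      exact this.symm
    exact ⟨v :: t, ⟨by simp, hch, hnd, a, b, hh, hl, hE⟩, rfl,
      fun x => Iff.rfl⟩
  | cons s0 s1 =>
    rw [List.Chain', isChain_append] at hch
    obtain ⟨hchs, hcht, hlink⟩ := hch
    have ha : a = s0 := by
      have := hh
      simp only [cons_append, head?_cons, Option.some.injEq] at this
      exact this.symm
    have hb : (v :: t).getLast? = some b := by
      rwa [getLast?_append_right (by simp)] at hl
    refine ⟨(v :: t) ++ s0 :: s1, ⟨by simp, ?_, hnd.perm perm_append_comm, ?_⟩,
      rfl, fun x => perm_append_comm.mem_iff⟩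
    · rw [List.Chain', isChain_append]
      refine ⟨hcht, hchs, fun x hx y hy => ?_⟩
      have hx' : x = b := by
        rw [hb] at hx
        exact (Option.some_inj.1 (Option.mem_def.1 hx)).symm
      have hy' : y = s0 := by
        rw [head?_cons] at hy
        exact (Option.some_inj.1 (Option.mem_def.1 hy)).symm
      rw [hx', hy', ← ha]
      exact hE
    · refine ⟨v, (s0 :: s1).getLast (cons_ne_nil _ _), rfl, ?_, ?_⟩
      · rw [getLast?_append_right (cons_ne_nil _ _), getLast?_eq_getLast (cons_ne_nil _ _)]
      · exact hlink _ (by rw [getLast?_eq_getLast (cons_ne_nil _ _)]; exact rfl) v rfl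

end Aux

/-- Let `ρ₁ ≺ ρ₂` be adjacent super-simple nodes of the GRN and `τ` an
appendage node of the GRN. There is a directed cycle in the GRN through `τ` containing
at least one simple node, all of whose simple nodes are non-super-simple simple nodes
between `ρ₁` and `ρ₂` and all of whose other nodes are appendage, if and only if there
is a directed cycle in the PRN through both `(τ,R)` and `(τ,P)` containing at least one
simple node, all of whose simple nodes are non-super-simple simple nodes between
`(ρ₁,P)` and `(ρ₂,R)` and all of whose other nodes are appendage. -/
theorem stmt_16 {V : Type*} [Fintype V] (E : V → V → Prop) (ι o ρ₁ ρ₂ τ : V)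
    (hssi : IsSuperSimpleNode E ι o ρ₁) (hssj : IsSuperSimpleNode E ι o ρ₂)
    (horder : ∃ l, IsSimplePathFrom E ι o l ∧ [ρ₁, ρ₂].Sublist l)
    (hadj : ¬ ∃ z, z ≠ ρ₁ ∧ z ≠ ρ₂ ∧ IsSuperSimpleNode E ι o z ∧ Between E ι o ρ₁ z ρ₂)
    (hτ : IsAppendageNode E ι o τ) :
    (∃ c : List V, IsCycle E c ∧ τ ∈ c ∧ (∃ v ∈ c, IsSimpleNode E ι o v) ∧
      ∀ v ∈ c,
        (IsSimpleNode E ι o v →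
          ¬ IsSuperSimpleNode E ι o v ∧ Between E ι o ρ₁ v ρ₂) ∧
        (¬ IsSimpleNode E ι o v → IsAppendageNode E ι o v)) ↔
    (∃ C : List (V × Bool), IsCycle (prnAdj E) C ∧ (τ, false) ∈ C ∧ (τ, true) ∈ C ∧
      (∃ x ∈ C, IsSimpleNode (prnAdj E) (ι, false) (o, true) x) ∧
      ∀ x ∈ C,
        (IsSimpleNode (prnAdj E) (ι, false) (o, true) x →
          ¬ IsSuperSimpleNode (prnAdj E) (ι, false) (o, true) x ∧
          Between (prnAdj E) (ι, false) (o, true) (ρ₁, true) x (ρ₂, false)) ∧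
        (¬ IsSimpleNode (prnAdj E) (ι, false) (o, true) x →
          IsAppendageNode (prnAdj E) (ι, false) (o, true) x)) := by

  constructor
  · rintro ⟨c, hc, hτc, ⟨v0, hv0c, hv0⟩, hcond⟩
    refine ⟨liftPath c, liftPath_cycle hc, mem_liftPath.2 hτc, mem_liftPath.2 hτc,
      ⟨(v0, false), mem_liftPath.2 hv0c, simpleNode_iff.2 hv0⟩, ?_⟩
    rintro ⟨v, b⟩ hx
    have hvc : v ∈ c := mem_liftPath.1 hx
    constructor
    · intro hs
      obtain ⟨hns, hbet⟩ := (hcond v hvc).1 (simpleNode_iff.1 hs)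
      exact ⟨fun h => hns (superSimpleNode_iff.1 h), between_iff.2 hbet⟩
    · intro hns hsimple
      exact ((hcond v hvc).2 (fun h => hns (simpleNode_iff.2 h))) (simpleNode_iff.1 hsimple)
  · rintro ⟨C, hC, hτF, hτT, ⟨x0, hx0C, hx0⟩, hcond⟩
    obtain ⟨C', hC', hC'h, hmem⟩ := cycle_rotate hC hτF
    obtain ⟨hne, hch, hnd, a, b, hh, hl, hE⟩ := hC'
    have ha : a = (τ, false) := by
      rw [hC'h] at hh
      exact (Option.some_inj.1 hh).symm
    subst ha
    obtain ⟨hEb, hb2⟩ : E b.1 τ ∧ b.2 = true := by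
      rcases hE with ⟨-, -, h3⟩ | ⟨h1, h2, -⟩
      · simp at h3
      · exact ⟨h1, h2⟩
    have hbw : b = (b.1, true) := by rw [← hb2]
    obtain ⟨l, hlne, hC'eq, hhd, hlst, hchl⟩ :=
      unlift C'.length C' le_rfl hch τ b.1 hC'h (by rw [hl, hbw])
    refine ⟨l, ⟨hlne, hchl, nodup_of_liftPath (hC'eq ▸ hnd), τ, b.1, hhd, hlst, hEb⟩,
      mem_of_mem_head? (by rw [hhd]; exact rfl), ?_, ?_⟩
    · obtain ⟨v0, b0⟩ := x0
      exact ⟨v0, mem_liftPath.1 (hC'eq ▸ (hmem _).2 hx0C), simpleNode_iff.1 hx0⟩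
    · intro v hvl
      have hvC : ((v, false) : V × Bool) ∈ C := by
        rw [← hmem, hC'eq]
        exact mem_liftPath.2 hvl
      constructor
      · intro hs
        obtain ⟨hns, hbet⟩ := (hcond (v, false) hvC).1 (simpleNode_iff.2 hs)
        exact ⟨fun h => hns (superSimpleNode_iff.2 h), between_iff.1 hbet⟩
      · intro hns hsimple
        exact ((hcond (v, false) hvC).2 (fun h => hns (simpleNode_iff.1 h)))
          (simpleNode_iff.2 hsimple)
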